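/- Fix a channel p(y|x) and λ ∈ [0,1]. The function t_λ(q) = H(Y_q) − λ H(q) on input distributions q coincides with its lower convex envelope at p if and only if for every finite-valued U with U - X - Y Markov and X ∼ p, one has H(Y) − λH(X) ≤ H(Y|U) − λH(X|U), equivalently I(U;Y) ≤ λ I(U;X). -/

import Mathlib

open scoped BigOperators

noncomputable section

/-- `p` is a probability mass function on a finite type. -/
def IsPMF {X : Type*} [Fintype X] (p : X → ℝ) : Prop :=
  (∀ x, 0 ≤ p x) ∧ ∑ x, p x = 1

/-- `p` is a joint probability mass function. -/
def IsJointPMF {X Y : Type*} [Fintype X] [Fintype Y] (p : X → Y → ℝ) : Prop :=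
  (∀ x y, 0 ≤ p x y) ∧ ∑ x, ∑ y, p x y = 1

/-- Hirschfeld–Gebelein–Rényi maximal correlation of a joint pmf `p`. -/
def maxCorr {X Y : Type*} [Fintype X] [Fintype Y] (p : X → Y → ℝ) : ℝ :=
  sSup {c : ℝ | ∃ f : X → ℝ, ∃ g : Y → ℝ,
    (∑ x, ∑ y, p x y * f x) = 0 ∧ (∑ x, ∑ y, p x y * g y) = 0 ∧
    (∑ x, ∑ y, p x y * (f x)^2) = 1 ∧ (∑ x, ∑ y, p x y * (g y)^2) = 1 ∧
    c = ∑ x, ∑ y, p x y * f x * g y}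

/-- Relative entropy (KL divergence) between pmfs on a finite type. -/
def KL {X : Type*} [Fintype X] (r p : X → ℝ) : ℝ :=
  ∑ x, r x * Real.log (r x / p x)

/-- `s*(X;Y)` for input distribution `p` and channel `W`. -/
def sStar {X Y : Type*} [Fintype X] [Fintype Y] (p : X → ℝ) (W : X → Y → ℝ) : ℝ :=
  sSup {c : ℝ | ∃ r : X → ℝ, IsPMF r ∧ r ≠ p ∧
    c = KL (fun y => ∑ x, r x * W x y) (fun y => ∑ x, p x * W x y) / KL r p}

/-- Shannon entropy of a pmf on a finite type. -/
def entropy {X : Type*} [Fintype X] (p : X → ℝ) : ℝ :=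
  ∑ x, Real.negMulLog (p x)

/-- Mutual information of a joint pmf. -/
def mutInfo {X Y : Type*} [Fintype X] [Fintype Y] (p : X → Y → ℝ) : ℝ :=
  entropy (fun x => ∑ y, p x y) + entropy (fun y => ∑ x, p x y)
    - entropy (fun z : X × Y => p z.1 z.2)

end

/-- The lower convex envelope of `f` on the probability simplex, evaluated at `q`:
the pointwise supremum of convex minorants of `f`. -/
noncomputable def lce {X : Type*} [Fintype X] (f : (X → ℝ) → ℝ) (q : X → ℝ) : ℝ :=
  sSup {c : ℝ | ∃ g : (X → ℝ) → ℝ, ConvexOn ℝ {r : X → ℝ | IsPMF r} g ∧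
    (∀ r, IsPMF r → g r ≤ f r) ∧ c = g q}

/-- `t_λ(q) = H(Y_q) − λ H(q)` for the channel `W`. -/
noncomputable def tFun {X Y : Type*} [Fintype X] [Fintype Y]
    (W : X → Y → ℝ) (lam : ℝ) (q : X → ℝ) : ℝ :=
  entropy (fun y => ∑ x, q x * W x y) - lam * entropy q

namespace TE

lemma negMulLog_add_le {a b : ℝ} (ha : 0 ≤ a) (hb : 0 ≤ b) :
    Real.negMulLog (a + b) ≤ Real.negMulLog a + Real.negMulLog b := by
  rcases eq_or_lt_of_le ha with h | h
  · simp [← h]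
  rcases eq_or_lt_of_le hb with h' | h'
  · simp [← h']
  have l1 : Real.log a ≤ Real.log (a + b) := Real.log_le_log h (by linarith)
  have l2 : Real.log b ≤ Real.log (a + b) := Real.log_le_log h' (by linarith)
  simp only [Real.negMulLog]
  nlinarith

lemma negMulLog_sum_le {ι : Type*} (s : Finset ι) (f : ι → ℝ) (hf : ∀ i ∈ s, 0 ≤ f i) :
    Real.negMulLog (∑ i ∈ s, f i) ≤ ∑ i ∈ s, Real.negMulLog (f i) := by
  induction s using Finset.cons_induction with
  | empty => simp
  | cons a s ha ih =>
    rw [Finset.sum_cons, Finset.sum_cons]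
    calc Real.negMulLog (f a + ∑ i ∈ s, f i)
        ≤ Real.negMulLog (f a) + Real.negMulLog (∑ i ∈ s, f i) :=
          negMulLog_add_le (hf a (Finset.mem_cons_self a s))
            (Finset.sum_nonneg fun i hi => hf i (Finset.mem_cons_of_mem hi))
      _ ≤ _ := by
          have := ih fun i hi => hf i (Finset.mem_cons_of_mem hi)
          linarith

lemma sum_negMulLog_le {X : Type*} [Fintype X] [Nonempty X] (v : X → ℝ) (hv : ∀ x, 0 ≤ v x) :
    ∑ x, Real.negMulLog (v x) ≤
      Real.negMulLog (∑ x, v x) + (∑ x, v x) * Real.log (Fintype.card X) := by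
  set N : ℝ := (Fintype.card X : ℝ) with hN
  have hNpos : (0:ℝ) < N := by positivity
  have jensen := Real.concaveOn_negMulLog.le_map_sum (t := Finset.univ)
    (w := fun _ : X => N⁻¹) (p := fun x => N * v x)
    (fun i _ => by positivity)
    (by rw [Finset.sum_const, Finset.card_univ, nsmul_eq_mul]; exact mul_inv_cancel₀ hNpos.ne')
    (fun i _ => by have := hv i; have : 0 ≤ N * v i := by positivity
                   exact this)
  simp only [smul_eq_mul] at jensen
  have hpt : ∀ x : X, N⁻¹ * Real.negMulLog (N * v x)
      = Real.negMulLog (v x) + N⁻¹ * (v x * Real.negMulLog N) := by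
    intro x
    rw [Real.negMulLog_mul]
    field_simp
    ring
  rw [Finset.sum_congr rfl (fun x _ => hpt x)] at jensen
  have harg : (∑ x : X, N⁻¹ * (N * v x)) = ∑ x, v x := by
    field_simp
  rw [Finset.sum_add_distrib, ← Finset.mul_sum, ← Finset.sum_mul, harg] at jensen
  have hnml : Real.negMulLog N = -(N * Real.log N) := by simp [Real.negMulLog]
  rw [hnml] at jensen
  have : N⁻¹ * ((∑ x, v x) * -(N * Real.log N)) = -((∑ x, v x) * Real.log N) := by
    field_simp
  rw [this] at jensen
  linarith

end TE


namespace TE2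
open TE

variable {X Y : Type*} [Fintype X] [Fintype Y]

/-- Un-normalized version of `tFun` on sub-probability vectors. -/
noncomputable def phi (W : X → Y → ℝ) (lam : ℝ) (v : X → ℝ) : ℝ :=
  ((∑ y, Real.negMulLog (∑ x, v x * W x y))
      - Real.negMulLog (∑ y, ∑ x, v x * W x y))
  - lam * ((∑ x, Real.negMulLog (v x)) - Real.negMulLog (∑ x, v x))

lemma phi_zero (W : X → Y → ℝ) (lam : ℝ) : phi W lam (fun _ => 0) = 0 := by
  simp [phi]

private lemma key_scale {ι : Type*} [Fintype ι] (c : ℝ) (f : ι → ℝ) :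
    (∑ i, Real.negMulLog (c * f i)) - Real.negMulLog (c * ∑ i, f i)
      = c * ((∑ i, Real.negMulLog (f i)) - Real.negMulLog (∑ i, f i)) := by
  have h1 : ∀ i : ι, Real.negMulLog (c * f i)
      = f i * Real.negMulLog c + c * Real.negMulLog (f i) := fun i => Real.negMulLog_mul c (f i)
  rw [Finset.sum_congr rfl (fun i _ => h1 i), Finset.sum_add_distrib,
    ← Finset.sum_mul, ← Finset.mul_sum, Real.negMulLog_mul]
  ring

lemma phi_smul (W : X → Y → ℝ) (lam : ℝ) (c : ℝ) (v : X → ℝ) :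
    phi W lam (fun x => c * v x) = c * phi W lam v := by
  have hx := key_scale c v
  have hy := key_scale c (fun y => ∑ x, v x * W x y)
  have h1 : (∑ y, Real.negMulLog (∑ x, c * v x * W x y))
      = ∑ y, Real.negMulLog (c * ∑ x, v x * W x y) := by
    refine Finset.sum_congr rfl fun y _ => ?_
    rw [Finset.mul_sum]
    congr 1
    exact Finset.sum_congr rfl fun x _ => by ring
  have h2 : (∑ y, ∑ x, c * v x * W x y) = c * ∑ y, ∑ x, v x * W x y := by
    rw [Finset.mul_sum]
    refine Finset.sum_congr rfl fun y _ => ?_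
    rw [Finset.mul_sum]
    exact Finset.sum_congr rfl fun x _ => by ring
  have h3 : (∑ x, c * v x) = c * ∑ x, v x := (Finset.mul_sum _ _ _).symm
  simp only [phi]
  rw [h1, h2, h3]
  linear_combination hy - lam * hx

/-- For a pmf `r` (and a channel `W`), `phi` agrees with `tFun`. -/
lemma phi_pmf (W : X → Y → ℝ) (hW : ∀ x, IsPMF (W x)) (lam : ℝ)
    (r : X → ℝ) (hr : IsPMF r) : phi W lam r = tFun W lam r := by
  have hyx : (∑ y, ∑ x, r x * W x y) = ∑ x, r x := by
    rw [Finset.sum_comm]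
    exact Finset.sum_congr rfl fun x _ => by
      rw [← Finset.mul_sum, (hW x).2, mul_one]
  rw [phi, hyx, hr.2, tFun, entropy, entropy]
  simp

/-- Lower bound for `phi` on nonnegative vectors. -/
lemma phi_lb [Nonempty X] (W : X → Y → ℝ) (hW : ∀ x, IsPMF (W x)) {lam : ℝ}
    (hlam0 : 0 ≤ lam) (hlam1 : lam ≤ 1) (v : X → ℝ) (hv : ∀ x, 0 ≤ v x) :
    -((∑ x, v x) * Real.log (Fintype.card X)) ≤ phi W lam v := by
  have hVy : ∀ y : Y, 0 ≤ ∑ x, v x * W x y := fun y =>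
    Finset.sum_nonneg fun x _ => mul_nonneg (hv x) ((hW x).1 y)
  have t1 : Real.negMulLog (∑ y, ∑ x, v x * W x y) ≤ ∑ y, Real.negMulLog (∑ x, v x * W x y) :=
    negMulLog_sum_le Finset.univ _ (fun y _ => hVy y)
  have t2 : (∑ x, Real.negMulLog (v x)) - Real.negMulLog (∑ x, v x)
      ≤ (∑ x, v x) * Real.log (Fintype.card X) := by
    have := sum_negMulLog_le v hv
    linarith
  have t3 : Real.negMulLog (∑ x, v x) ≤ ∑ x, Real.negMulLog (v x) :=
    negMulLog_sum_le Finset.univ v (fun x _ => hv x)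
  have hlog : 0 ≤ Real.log (Fintype.card X) := by
    have : (1:ℝ) ≤ (Fintype.card X : ℝ) := by exact_mod_cast Fintype.card_pos
    exact Real.log_nonneg this
  have hs : 0 ≤ ∑ x, v x := Finset.sum_nonneg fun x _ => hv x
  have h4 : lam * ((∑ x, Real.negMulLog (v x)) - Real.negMulLog (∑ x, v x))
      ≤ (∑ x, v x) * Real.log (Fintype.card X) := by
    calc lam * ((∑ x, Real.negMulLog (v x)) - Real.negMulLog (∑ x, v x))
        ≤ 1 * ((∑ x, Real.negMulLog (v x)) - Real.negMulLog (∑ x, v x)) := by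
          apply mul_le_mul_of_nonneg_right hlam1; linarith
      _ ≤ (∑ x, v x) * Real.log (Fintype.card X) := by linarith
  unfold phi
  linarith


/-- Key identity relating the mutual-information inequality to `phi`. -/
lemma mutInfo_identity (W : X → Y → ℝ) (hW : ∀ x, IsPMF (W x)) (lam : ℝ)
    (p : X → ℝ) (n : ℕ) (q : Fin n → X → ℝ) (hpm : ∀ x, ∑ u, q u x = p x) :
    lam * mutInfo q - mutInfo (fun u y => ∑ x, q u x * W x y)
      = (∑ u, phi W lam (q u)) - tFun W lam p := by
  have hrow : ∀ u : Fin n, (∑ y, ∑ x, q u x * W x y) = ∑ x, q u x := by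
    intro u
    rw [Finset.sum_comm]
    exact Finset.sum_congr rfl fun x _ => by rw [← Finset.mul_sum, (hW x).2, mul_one]
  have hphi : (∑ u, phi W lam (q u)) =
      ((∑ u, ∑ y, Real.negMulLog (∑ x, q u x * W x y)) - ∑ u, Real.negMulLog (∑ x, q u x))
      - lam * ((∑ u, ∑ x, Real.negMulLog (q u x)) - ∑ u, Real.negMulLog (∑ x, q u x)) := by
    have e : ∀ u ∈ Finset.univ, phi W lam (q u)
        = ((∑ y, Real.negMulLog (∑ x, q u x * W x y)) - Real.negMulLog (∑ x, q u x))
          - lam * ((∑ x, Real.negMulLog (q u x)) - Real.negMulLog (∑ x, q u x)) := by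
      intro u _
      simp only [phi, hrow u]
    rw [Finset.sum_congr rfl e, Finset.sum_sub_distrib, Finset.sum_sub_distrib,
      ← Finset.mul_sum, Finset.sum_sub_distrib]
  have hrowSum : (∑ u, Real.negMulLog (∑ y, ∑ x, q u x * W x y))
      = ∑ u, Real.negMulLog (∑ x, q u x) :=
    Finset.sum_congr rfl fun u _ => by rw [hrow u]
  have hcolYSum : (∑ y, Real.negMulLog (∑ u, ∑ x, q u x * W x y))
      = ∑ y, Real.negMulLog (∑ x, p x * W x y) := by
    refine Finset.sum_congr rfl fun y _ => ?_
    congr 1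
    rw [Finset.sum_comm]
    exact Finset.sum_congr rfl fun x _ => by rw [← Finset.sum_mul, hpm x]
  have hcolXSum : (∑ x, Real.negMulLog (∑ u, q u x)) = ∑ x, Real.negMulLog (p x) :=
    Finset.sum_congr rfl fun x _ => by rw [hpm x]
  simp only [mutInfo, entropy, tFun, Fintype.sum_prod_type]
  rw [hphi, hrowSum, hcolYSum, hcolXSum]
  ring


/-- Decomposition values of `r`. -/
def Dset (W : X → Y → ℝ) (lam : ℝ) (r : X → ℝ) : Set ℝ :=
  {c | ∃ n, ∃ q : Fin n → X → ℝ, (∀ u x, 0 ≤ q u x) ∧ (∀ x, ∑ u, q u x = r x) ∧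
    c = ∑ u, phi W lam (q u)}

/-- The natural convexification of `tFun`. -/
noncomputable def Kfun (W : X → Y → ℝ) (lam : ℝ) (r : X → ℝ) : ℝ := sInf (Dset W lam r)

lemma phi_mem_Dset (W : X → Y → ℝ) (lam : ℝ) (r : X → ℝ) (hr : ∀ x, 0 ≤ r x) :
    phi W lam r ∈ Dset W lam r := by
  exact ⟨1, fun _ => r, fun _ x => hr x, fun x => by simp, by simp⟩

lemma Dset_lb [Nonempty X] (W : X → Y → ℝ) (hW : ∀ x, IsPMF (W x)) {lam : ℝ}
    (hlam0 : 0 ≤ lam) (hlam1 : lam ≤ 1) (r : X → ℝ) :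
    ∀ c ∈ Dset W lam r, -((∑ x, r x) * Real.log (Fintype.card X)) ≤ c := by
  rintro c ⟨n, q, hq, hpm, rfl⟩
  have h1 : ∀ u : Fin n, -((∑ x, q u x) * Real.log (Fintype.card X)) ≤ phi W lam (q u) :=
    fun u => phi_lb W hW hlam0 hlam1 (q u) (hq u)
  have h2 : (∑ u, -((∑ x, q u x) * Real.log (Fintype.card X)))
      = -((∑ x, r x) * Real.log (Fintype.card X)) := by
    rw [Finset.sum_neg_distrib, ← Finset.sum_mul]
    congr 2
    rw [Finset.sum_comm]
    exact Finset.sum_congr rfl fun x _ => hpm x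
  calc -((∑ x, r x) * Real.log (Fintype.card X)) = _ := h2.symm
    _ ≤ ∑ u, phi W lam (q u) := Finset.sum_le_sum fun u _ => h1 u

lemma Dset_bddBelow [Nonempty X] (W : X → Y → ℝ) (hW : ∀ x, IsPMF (W x)) {lam : ℝ}
    (hlam0 : 0 ≤ lam) (hlam1 : lam ≤ 1) (r : X → ℝ) : BddBelow (Dset W lam r) :=
  ⟨_, fun c hc => Dset_lb W hW hlam0 hlam1 r c hc⟩

lemma Dset_combine (W : X → Y → ℝ) (lam : ℝ) {a b : ℝ} (ha : 0 ≤ a) (hb : 0 ≤ b)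
    {r1 r2 : X → ℝ} {c1 c2 : ℝ} (h1 : c1 ∈ Dset W lam r1) (h2 : c2 ∈ Dset W lam r2) :
    a * c1 + b * c2 ∈ Dset W lam (a • r1 + b • r2) := by
  obtain ⟨n1, q1, hq1, hm1, rfl⟩ := h1
  obtain ⟨n2, q2, hq2, hm2, rfl⟩ := h2
  refine ⟨n1 + n2, Fin.append (fun u x => a * q1 u x) (fun u x => b * q2 u x), ?_, ?_, ?_⟩
  · intro u x
    refine Fin.addCases (fun i => ?_) (fun i => ?_) u
    · rw [Fin.append_left]; exact mul_nonneg ha (hq1 i x)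
    · rw [Fin.append_right]; exact mul_nonneg hb (hq2 i x)
  · intro x
    rw [Fin.sum_univ_add]
    simp only [Fin.append_left, Fin.append_right, Pi.add_apply, Pi.smul_apply, smul_eq_mul]
    rw [← Finset.mul_sum, ← Finset.mul_sum, hm1 x, hm2 x]
  · rw [Fin.sum_univ_add]
    simp only [Fin.append_left, Fin.append_right]
    rw [Finset.mul_sum, Finset.mul_sum]
    congr 1
    · exact Finset.sum_congr rfl fun u _ => (phi_smul W lam a (q1 u)).symm
    · exact Finset.sum_congr rfl fun u _ => (phi_smul W lam b (q2 u)).symm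

lemma convex_pmf : Convex ℝ {r : X → ℝ | IsPMF r} := by
  intro r1 h1 r2 h2 a b ha hb hab
  constructor
  · intro x
    simp only [Pi.add_apply, Pi.smul_apply, smul_eq_mul]
    have := h1.1 x; have := h2.1 x
    positivity
  · simp only [Pi.add_apply, Pi.smul_apply, smul_eq_mul]
    rw [Finset.sum_add_distrib, ← Finset.mul_sum, ← Finset.mul_sum, h1.2, h2.2]
    linarith

lemma Kfun_convexOn [Nonempty X] (W : X → Y → ℝ) (hW : ∀ x, IsPMF (W x)) {lam : ℝ}
    (hlam0 : 0 ≤ lam) (hlam1 : lam ≤ 1) :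
    ConvexOn ℝ {r : X → ℝ | IsPMF r} (Kfun W lam) := by
  refine ⟨convex_pmf, ?_⟩
  intro r1 h1 r2 h2 a b ha hb hab
  rcases eq_or_lt_of_le ha with rfl | hapos
  · have hb1 : b = 1 := by linarith
    subst hb1
    simp
  rcases eq_or_lt_of_le hb with rfl | hbpos
  · have ha1 : a = 1 := by linarith
    subst ha1
    simp
  have hbdd := Dset_bddBelow W hW hlam0 hlam1 (a • r1 + b • r2)
  have hne1 : (Dset W lam r1).Nonempty := ⟨_, phi_mem_Dset W lam r1 h1.1⟩
  have hne2 : (Dset W lam r2).Nonempty := ⟨_, phi_mem_Dset W lam r2 h2.1⟩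
  have key : ∀ c1 ∈ Dset W lam r1, ∀ c2 ∈ Dset W lam r2,
      Kfun W lam (a • r1 + b • r2) ≤ a * c1 + b * c2 := fun c1 hc1 c2 hc2 =>
    csInf_le hbdd (Dset_combine W lam ha hb hc1 hc2)
  have step : ∀ c1 ∈ Dset W lam r1,
      Kfun W lam (a • r1 + b • r2) ≤ a * c1 + b * Kfun W lam r2 := by
    intro c1 hc1
    have h2' : (Kfun W lam (a • r1 + b • r2) - a * c1) / b ≤ Kfun W lam r2 := by
      refine le_csInf hne2 fun c2 hc2 => ?_
      rw [div_le_iff₀ hbpos]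
      have := key c1 hc1 c2 hc2
      linarith
    rw [div_le_iff₀ hbpos] at h2'
    linarith
  have final : (Kfun W lam (a • r1 + b • r2) - b * Kfun W lam r2) / a ≤ Kfun W lam r1 := by
    refine le_csInf hne1 fun c1 hc1 => ?_
    rw [div_le_iff₀ hapos]
    have := step c1 hc1
    linarith
  rw [div_le_iff₀ hapos] at final
  simp only [smul_eq_mul]
  linarith

lemma Kfun_le_tFun [Nonempty X] (W : X → Y → ℝ) (hW : ∀ x, IsPMF (W x)) {lam : ℝ}
    (hlam0 : 0 ≤ lam) (hlam1 : lam ≤ 1) (r : X → ℝ) (hr : IsPMF r) :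
    Kfun W lam r ≤ tFun W lam r := by
  have := csInf_le (Dset_bddBelow W hW hlam0 hlam1 r) (phi_mem_Dset W lam r hr.1)
  rwa [phi_pmf W hW lam r hr] at this

end TE2

/-- `t_λ` coincides with its lower convex envelope at `p` iff for every
finite-valued `U` with `U - X - Y` Markov and `X ∼ p` (i.e. every joint pmf `q(u,x)` with
`X`-marginal `p`), `I(U;Y) ≤ λ I(U;X)`. -/
theorem touch_envelope_iff_dpi {X Y : Type*} [Fintype X] [Fintype Y]
    (W : X → Y → ℝ) (hW : ∀ x, IsPMF (W x))
    (p : X → ℝ) (hp : IsPMF p) (lam : ℝ) (hlam0 : 0 ≤ lam) (hlam1 : lam ≤ 1) :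
    lce (tFun W lam) p = tFun W lam p ↔
      ∀ (n : ℕ) (q : Fin n → X → ℝ), (∀ u x, 0 ≤ q u x) → (∀ x, ∑ u, q u x = p x) →
        mutInfo (fun u y => ∑ x, q u x * W x y) ≤ lam * mutInfo q := by
  rcases isEmpty_or_nonempty X with hX | hX
  · exact absurd hp.2 (by simp [Finset.univ_eq_empty])
  classical
  set L := Real.log (Fintype.card X) with hL
  set S := {c : ℝ | ∃ g : (X → ℝ) → ℝ, ConvexOn ℝ {r : X → ℝ | IsPMF r} g ∧
    (∀ r, IsPMF r → g r ≤ tFun W lam r) ∧ c = g p} with hSdef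
  have hlce : lce (tFun W lam) p = sSup S := rfl
  have hconst : ConvexOn ℝ {r : X → ℝ | IsPMF r} (fun _ => -L) :=
    convexOn_const _ TE2.convex_pmf
  have hmin : ∀ r, IsPMF r → -L ≤ tFun W lam r := by
    intro r hr
    have h1 := TE2.phi_lb W hW hlam0 hlam1 r hr.1
    rw [hr.2, one_mul] at h1
    rwa [TE2.phi_pmf W hW lam r hr] at h1
  have hSne : S.Nonempty := ⟨-L, fun _ => -L, hconst, fun r hr => hmin r hr, rfl⟩
  have hSub : ∀ c ∈ S, c ≤ tFun W lam p := by
    rintro c ⟨g, hg, hm, rfl⟩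
    exact hm p hp
  have hbdd : BddAbove S := ⟨tFun W lam p, fun c hc => hSub c hc⟩
  constructor
  · intro h n q hq hpm
    have hid := TE2.mutInfo_identity W hW lam p n q hpm
    have hbound : tFun W lam p ≤ ∑ u, TE2.phi W lam (q u) := by
      rw [← h, hlce]
      refine csSup_le hSne ?_
      rintro c ⟨g, hg, hm, rfl⟩
      -- Jensen step
      set al : Fin n → ℝ := fun u => ∑ x, q u x with hal
      set s : Finset (Fin n) := Finset.univ.filter (fun u => al u ≠ 0) with hs
      have hmem_s : ∀ u, u ∈ s ↔ al u ≠ 0 := by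
        intro u; rw [hs]; simp [Finset.mem_filter]
      have hal0 : ∀ u, 0 ≤ al u := fun u => Finset.sum_nonneg fun x _ => hq u x
      have halsum : ∑ u, al u = 1 := by
        calc ∑ u, al u = ∑ x, ∑ u, q u x := Finset.sum_comm
          _ = ∑ x, p x := Finset.sum_congr rfl fun x _ => hpm x
          _ = 1 := hp.2
      have hzero : ∀ u ∉ s, q u = fun _ => 0 := by
        intro u hu
        have hu' : al u = 0 := by
          by_contra hne
          exact hu ((hmem_s u).2 hne)
        funext x
        exact (Finset.sum_eq_zero_iff_of_nonneg (fun x _ => hq u x)).1 hu' x (Finset.mem_univ x)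
      have hssum : ∑ u ∈ s, al u = 1 := by
        rw [← halsum]
        refine Finset.sum_subset (Finset.subset_univ s) ?_
        intro u _ hu
        by_contra hne
        exact hu ((hmem_s u).2 hne)
      set z : Fin n → X → ℝ := fun u x => (al u)⁻¹ * q u x with hz
      have hzpmf : ∀ u ∈ s, IsPMF (z u) := by
        intro u hu
        have hne : al u ≠ 0 := (hmem_s u).1 hu
        refine ⟨fun x => mul_nonneg (inv_nonneg.2 (hal0 u)) (hq u x), ?_⟩
        rw [show (∑ x, z u x) = (al u)⁻¹ * ∑ x, q u x from by
          rw [Finset.mul_sum]]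
        rw [show (∑ x, q u x) = al u from rfl]
        exact inv_mul_cancel₀ hne
      have hmix : (∑ u ∈ s, al u • z u) = p := by
        funext x
        rw [Finset.sum_apply]
        have e1 : ∀ u ∈ s, (al u • z u) x = q u x := by
          intro u hu
          have hne : al u ≠ 0 := (hmem_s u).1 hu
          simp only [Pi.smul_apply, smul_eq_mul, hz]
          field_simp
        rw [Finset.sum_congr rfl e1,
          Finset.sum_subset (Finset.subset_univ s)
            (fun u _ hu => by rw [hzero u hu]),
          hpm x]
      have jensen := hg.map_sum_le (t := s) (fun u _ => hal0 u) hssum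
        (fun u hu => hzpmf u hu)
      rw [hmix] at jensen
      have hterm : ∀ u ∈ s, al u * g (z u) ≤ TE2.phi W lam (q u) := by
        intro u hu
        have hne : al u ≠ 0 := (hmem_s u).1 hu
        have h1 : g (z u) ≤ tFun W lam (z u) := hm (z u) (hzpmf u hu)
        have h2 : al u * tFun W lam (z u) = TE2.phi W lam (q u) := by
          rw [← TE2.phi_pmf W hW lam (z u) (hzpmf u hu),
            ← TE2.phi_smul W lam (al u) (z u)]
          congr 1
          funext x
          simp only [hz]
          field_simp
        calc al u * g (z u) ≤ al u * tFun W lam (z u) :=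
              mul_le_mul_of_nonneg_left h1 (hal0 u)
          _ = _ := h2
      have hfull : (∑ u ∈ s, TE2.phi W lam (q u)) = ∑ u, TE2.phi W lam (q u) :=
        Finset.sum_subset (Finset.subset_univ s)
          (fun u _ hu => by rw [hzero u hu, TE2.phi_zero])
      calc g p ≤ ∑ u ∈ s, al u • g (z u) := jensen
        _ = ∑ u ∈ s, al u * g (z u) := by simp [smul_eq_mul]
        _ ≤ ∑ u ∈ s, TE2.phi W lam (q u) := Finset.sum_le_sum hterm
        _ = ∑ u, TE2.phi W lam (q u) := hfull
    linarith
  · intro h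
    rw [hlce]
    refine le_antisymm (csSup_le hSne hSub) ?_
    have hKp : TE2.Kfun W lam p = tFun W lam p := by
      refine le_antisymm (TE2.Kfun_le_tFun W hW hlam0 hlam1 p hp) ?_
      refine le_csInf ⟨_, TE2.phi_mem_Dset W lam p hp.1⟩ ?_
      rintro c ⟨n, q, hq, hpm, rfl⟩
      have hid := TE2.mutInfo_identity W hW lam p n q hpm
      have := h n q hq hpm
      linarith
    have hmem : tFun W lam p ∈ S := ⟨TE2.Kfun W lam, TE2.Kfun_convexOn W hW hlam0 hlam1,
      fun r hr => TE2.Kfun_le_tFun W hW hlam0 hlam1 r hr, hKp.symm⟩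
    exact le_csSup hbdd hmem
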